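/- arXiv:2303.13444 — 5 statements merged into one kernel-verified Lean document; each statement's English description precedes it below -/
import Mathlib

section
/- Let κ be an uncountable regular cardinal and let f : A → B be a faithfully flat homomorphism of commutative rings. Order subextensions of f by componentwise inclusion. Then: (a) every κ-small subextension of f is contained in a κ-small faithfully flat subextension of f (the inclusion of the poset of κ-small faithfully flat subextensions into the poset of κ-small subextensions is cofinal); and (b) the poset of κ-small faithfully flat subextensions of f is κ-directed: every subset of it of cardinality < κ admits an upper bound in it. -/
universe u

/-- A subextension of a ring homomorphism `f : A → B` is a pair of a subring `C ⊆ A` and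
a subring `D ⊆ B` such that `f` maps `C` into `D`, so that `f` restricts to a ring
homomorphism `C → D`. -/
structure Subextension {A B : Type u} [CommRing A] [CommRing B] (f : A →+* B) where
  left : Subring A
  right : Subring B
  maps_mem : ∀ x ∈ left, f x ∈ right

namespace Subextension

variable {A B : Type u} [CommRing A] [CommRing B] {f : A →+* B}

/-- The restriction of `f` to a ring homomorphism `C → D`. -/
def restrict (E : Subextension f) : E.left →+* E.right :=
  (f.comp E.left.subtype).codRestrict E.right fun x => E.maps_mem x x.2

/-- A subextension is `κ`-small if both of its subrings have cardinality `< κ`. -/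
def Small (κ : Cardinal.{u}) (E : Subextension f) : Prop :=
  Cardinal.mk E.left < κ ∧ Cardinal.mk E.right < κ

/-- A subextension is faithfully flat if `D` is a faithfully flat `C`-module via the
restriction of `f`. -/
def FaithfullyFlat (E : Subextension f) : Prop :=
  letI : Algebra E.left E.right := E.restrict.toAlgebra
  Module.FaithfullyFlat E.left E.right

/-- Componentwise inclusion of subextensions. -/
def le (E E' : Subextension f) : Prop :=
  E.left ≤ E'.left ∧ E.right ≤ E'.right

end Subextension

open Cardinal


namespace SubextAux

/-- Cardinality bound for subring closure. -/
lemma mk_closure_le {α : Type u} [CommRing α] (s : Set α) :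
    #(Subring.closure s) ≤ max #s ℵ₀ := by
  have e := (Subring.closureEquivAdjoinInt s).toEquiv
  rw [Cardinal.mk_congr e]
  have hrange : Algebra.adjoin ℤ s = (MvPolynomial.aeval (Subtype.val : s → α)).range := by
    rw [← Algebra.adjoin_range_eq_range_aeval, Subtype.range_coe]
  rw [hrange]
  calc #((MvPolynomial.aeval (Subtype.val : s → α)).range)
      ≤ #(MvPolynomial s ℤ) := Cardinal.mk_range_le
    _ ≤ max (max (Cardinal.lift.{u} #ℤ) (Cardinal.lift.{0} #s)) ℵ₀ :=
        MvPolynomial.cardinalMk_le_max_lift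
    _ ≤ max #s ℵ₀ := by
        simp only [Cardinal.mk_int, Cardinal.lift_aleph0, Cardinal.lift_id]
        simp [Cardinal.lift_id, max_comm, max_assoc, max_left_comm]

end SubextAux

namespace SubextAux

variable {A B : Type u} [CommRing A] [CommRing B] {f : A →+* B}

lemma flat_solve (hf : letI : Algebra A B := f.toAlgebra; Module.FaithfullyFlat A B)
    {n : ℕ} (a : Fin n → A) (d : Fin n → B) (h : ∑ i, f (a i) * d i = 0) :
    ∃ (m : ℕ) (c : Fin n → Fin m → A) (y : Fin m → B),
      (∀ i, d i = ∑ j, f (c i j) * y j) ∧ ∀ j, ∑ i, a i * c i j = 0 := by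
  letI : Algebra A B := f.toAlgebra
  have hfl : Module.Flat A B := hf.toFlat
  set a' : ULift.{u} (Fin n) → A := fun i => a i.down with ha'
  set d' : ULift.{u} (Fin n) → B := fun i => d i.down with hd'
  have h' : ∑ i, a' i • d' i = 0 := by
    refine Eq.trans (Fintype.sum_equiv Equiv.ulift _ (fun i => a i • d i) fun i => rfl) ?_
    simpa [Algebra.smul_def, RingHom.algebraMap_toAlgebra] using h
  obtain ⟨k, c, y, h1, h2⟩ :=
    Module.Flat.isTrivialRelation_of_sum_smul_eq_zero (f := a') (x := d') h'
  let κ := Fin k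
  refine ⟨Fintype.card κ, fun i j => c ⟨i⟩ ((Fintype.equivFin κ).symm j),
    fun j => y ((Fintype.equivFin κ).symm j), fun i => ?_, fun j => ?_⟩
  · refine Eq.trans (h1 ⟨i⟩) ?_
    refine Fintype.sum_equiv (Fintype.equivFin κ) _ _ fun k => ?_
    simp [Algebra.smul_def, RingHom.algebraMap_toAlgebra]
  · exact (Fintype.sum_equiv Equiv.ulift
      (fun i => a' i * c i ((Fintype.equivFin κ).symm j)) _ fun i => rfl).symm.trans
      (h2 ((Fintype.equivFin κ).symm j))

lemma unit_solve (hf : letI : Algebra A B := f.toAlgebra; Module.FaithfullyFlat A B)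
    {n : ℕ} (a : Fin n → A) (d : Fin n → B) (h : ∑ i, f (a i) * d i = 1) :
    ∃ x : Fin n → A, ∑ i, a i * x i = 1 := by
  letI : Algebra A B := f.toAlgebra
  set I : Ideal A := Ideal.span (Set.range a) with hI
  have hone : (1 : B) ∈ I • (⊤ : Submodule A B) := by
    rw [← h]
    refine Submodule.sum_mem _ fun i _ => ?_
    have : f (a i) * d i = a i • d i := by
      simp [Algebra.smul_def, RingHom.algebraMap_toAlgebra]
    rw [this]
    exact Submodule.smul_mem_smul (Ideal.subset_span ⟨i, rfl⟩) trivial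
  have hmul : ∀ (b z : B), z ∈ I • (⊤ : Submodule A B) → b * z ∈ I • (⊤ : Submodule A B) := by
    intro b z hz
    refine Submodule.smul_induction_on hz (fun r hr m _ => ?_) (fun x y hx hy => ?_)
    · rw [mul_smul_comm]
      exact Submodule.smul_mem_smul hr trivial
    · rw [mul_add]
      exact Submodule.add_mem _ hx hy
  have htop : I • (⊤ : Submodule A B) = ⊤ := by
    rw [eq_top_iff]
    intro b _
    have hb : b = b * 1 := by ring
    rw [hb]
    exact hmul b 1 hone
  have : I = ⊤ := ((Module.FaithfullyFlat.iff_flat_and_ideal_smul_eq_top A B).mp hf).2 I htop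
  have h1 : (1 : A) ∈ Ideal.span (Set.range a) := by rw [← hI, this]; trivial
  have h1' : (1 : A) ∈ Submodule.span A (Set.range a) := h1
  rw [Submodule.mem_span_range_iff_exists_fun] at h1'
  obtain ⟨x, hx⟩ := h1'
  exact ⟨x, by rw [← hx]; exact Finset.sum_congr rfl fun i _ => by rw [smul_eq_mul, mul_comm]⟩

end SubextAux

namespace SubextAux2

open SubextAux

variable {A B : Type u} [CommRing A] [CommRing B] {f : A →+* B}

/-- The type of finite relations `∑ f(aᵢ) dᵢ = b` with entries in a subextension. -/
def Rel (E : Subextension f) (b : B) : Type u :=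
  Σ n : ℕ, {p : (Fin n → E.left) × (Fin n → E.right) //
    ∑ i, f ((p.1 i : A)) * ((p.2 i : B)) = b}

lemma mk_rel_le (E : Subextension f) (b : B) :
    #(Rel E b) ≤ max ℵ₀ (#E.left * #E.right) := by
  have hinj : Function.Injective (fun r : Rel E b =>
      List.ofFn (fun i => (r.2.1.1 i, r.2.1.2 i))) := by
    rintro ⟨n, ⟨⟨a, d⟩, h⟩⟩ ⟨n', ⟨⟨a', d'⟩, h'⟩⟩ hl
    simp only [List.ofFn_inj'] at hl
    obtain ⟨rfl, hl⟩ := Sigma.mk.inj_iff.mp hl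
    rw [heq_eq_eq] at hl
    have h1 : a = a' := funext fun i => congrArg Prod.fst (congrFun hl i)
    have h2 : d = d' := funext fun i => congrArg Prod.snd (congrFun hl i)
    subst h1; subst h2; rfl
  calc #(Rel E b) ≤ #(List (E.left × E.right)) := Cardinal.mk_le_of_injective hinj
    _ ≤ max ℵ₀ #(E.left × E.right) := Cardinal.mk_list_le_max _
    _ = max ℵ₀ (#E.left * #E.right) := by rw [Cardinal.mk_prod, Cardinal.lift_id,
        Cardinal.lift_id]

lemma mk_rel_lt {κ : Cardinal.{u}} (hκ : ℵ₀ < κ) (E : Subextension f) (b : B)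
    (hsm : E.Small κ) : #(Rel E b) < κ :=
  (mk_rel_le E b).trans_lt (max_lt hκ (Cardinal.mul_lt_of_lt hκ.le hsm.1 hsm.2))

variable (hf : letI : Algebra A B := f.toAlgebra; Module.FaithfullyFlat A B)

/-- Chosen solution to a zero-relation. -/
noncomputable def solZ (E : Subextension f) (r : Rel E (0 : B)) :
    Σ m : ℕ, (Fin r.1 → Fin m → A) × (Fin m → B) :=
  have h := flat_solve hf (fun i => (r.2.1.1 i : A))
    (fun i => (r.2.1.2 i : B)) r.2.2
  ⟨h.choose, h.choose_spec.choose, h.choose_spec.choose_spec.choose⟩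

lemma solZ_spec (E : Subextension f) (r : Rel E (0 : B)) :
    (∀ i, (r.2.1.2 i : B) = ∑ j, f ((solZ hf E r).2.1 i j) * (solZ hf E r).2.2 j) ∧
    ∀ j, ∑ i, (r.2.1.1 i : A) * (solZ hf E r).2.1 i j = 0 :=
  (flat_solve hf (fun i => (r.2.1.1 i : A))
    (fun i => (r.2.1.2 i : B)) r.2.2).choose_spec.choose_spec.choose_spec

/-- Chosen solution to a unit-relation. -/
noncomputable def solU (E : Subextension f) (r : Rel E (1 : B)) : Fin r.1 → A :=
  (unit_solve hf (fun i => (r.2.1.1 i : A))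
    (fun i => (r.2.1.2 i : B)) r.2.2).choose

lemma solU_spec (E : Subextension f) (r : Rel E (1 : B)) :
    ∑ i, (r.2.1.1 i : A) * solU hf E r i = 1 :=
  (unit_solve hf (fun i => (r.2.1.1 i : A))
    (fun i => (r.2.1.2 i : B)) r.2.2).choose_spec

/-- New generators on the `A` side. -/
noncomputable def stepSetA (E : Subextension f) : Set A :=
  (E.left : Set A) ∪ (⋃ (r : Rel E (0 : B)) (i : Fin r.1), Set.range ((solZ hf E r).2.1 i)) ∪
    ⋃ r : Rel E (1 : B), Set.range (solU hf E r)

/-- New generators on the `B` side. -/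
noncomputable def stepSetB (E : Subextension f) : Set B :=
  (E.right : Set B) ∪ ⋃ r : Rel E (0 : B), Set.range (solZ hf E r).2.2

/-- One step of the saturation process. -/
noncomputable def step (E : Subextension f) : Subextension f where
  left := Subring.closure (stepSetA hf E)
  right := Subring.closure (f '' stepSetA hf E ∪ stepSetB hf E)
  maps_mem := fun x hx => by
    have h1 : f x ∈ (Subring.closure (stepSetA hf E)).map f := ⟨x, hx, rfl⟩
    rw [RingHom.map_closure] at h1
    exact Subring.closure_mono Set.subset_union_left h1

lemma le_step (E : Subextension f) : E.le (step hf E) :=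
  ⟨fun x hx => Subring.subset_closure (Or.inl (Or.inl hx)),
   fun x hx => Subring.subset_closure (Or.inr (Or.inl hx))⟩


lemma step_solveZ (E : Subextension f) {n : ℕ} (a : Fin n → A) (d : Fin n → B)
    (ha : ∀ i, a i ∈ E.left) (hd : ∀ i, d i ∈ E.right) (h : ∑ i, f (a i) * d i = 0) :
    ∃ (m : ℕ) (c : Fin n → Fin m → A) (y : Fin m → B),
      (∀ i j, c i j ∈ (step hf E).left) ∧ (∀ j, y j ∈ (step hf E).right) ∧
      (∀ i, d i = ∑ j, f (c i j) * y j) ∧ ∀ j, ∑ i, a i * c i j = 0 := by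
  set r : Rel E (0 : B) := ⟨n, ⟨(fun i => ⟨a i, ha i⟩, fun i => ⟨d i, hd i⟩), by simpa using h⟩⟩
    with hr
  obtain ⟨h1, h2⟩ := solZ_spec hf E r
  refine ⟨(solZ hf E r).1, (solZ hf E r).2.1, (solZ hf E r).2.2, fun i j => ?_, fun j => ?_,
    fun i => h1 i, fun j => h2 j⟩
  · exact Subring.subset_closure (Or.inl (Or.inr (Set.mem_iUnion.2 ⟨r, Set.mem_iUnion.2
      ⟨i, Set.mem_range_self j⟩⟩)))
  · exact Subring.subset_closure (Set.mem_union_right _ (Or.inr (Set.mem_iUnion.2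
      ⟨r, Set.mem_range_self j⟩)))

lemma step_solveU (E : Subextension f) {n : ℕ} (a : Fin n → A) (d : Fin n → B)
    (ha : ∀ i, a i ∈ E.left) (hd : ∀ i, d i ∈ E.right) (h : ∑ i, f (a i) * d i = 1) :
    ∃ x : Fin n → A, (∀ i, x i ∈ (step hf E).left) ∧ ∑ i, a i * x i = 1 := by
  set r : Rel E (1 : B) := ⟨n, ⟨(fun i => ⟨a i, ha i⟩, fun i => ⟨d i, hd i⟩), by simpa using h⟩⟩
    with hr
  refine ⟨solU hf E r, fun i => ?_, solU_spec hf E r⟩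
  exact Subring.subset_closure (Or.inr (Set.mem_iUnion.2 ⟨r, Set.mem_range_self i⟩))

lemma step_small {κ : Cardinal.{u}} (hreg : κ.IsRegular) (hκ : ℵ₀ < κ)
    (E : Subextension f) (hsm : E.Small κ) : (step hf E).Small κ := by
  have hz := mk_rel_lt hκ E (0 : B) hsm
  have hu := mk_rel_lt hκ E (1 : B) hsm
  have hEl : #((E.left : Set A) : Set A) < κ := hsm.1
  have hEr : #((E.right : Set B) : Set B) < κ := hsm.2
  have h2 : #(⋃ (r : Rel E (0 : B)) (i : Fin r.1), Set.range ((solZ hf E r).2.1 i)) < κ := by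
    refine Cardinal.mk_iUnion_le_sum_mk.trans_lt (Cardinal.sum_lt_of_isRegular hreg hz
      fun r => ?_)
    have hfin : (⋃ i : Fin r.1, Set.range ((solZ hf E r).2.1 i)).Finite :=
      Set.finite_iUnion fun i => Set.finite_range _
    exact hfin.lt_aleph0.trans hκ
  have h3 : #(⋃ r : Rel E (1 : B), Set.range (solU hf E r)) < κ := by
    refine Cardinal.mk_iUnion_le_sum_mk.trans_lt (Cardinal.sum_lt_of_isRegular hreg hu
      fun r => ?_)
    exact (Set.finite_range _).lt_aleph0.trans hκ
  have h4 : #(⋃ r : Rel E (0 : B), Set.range (solZ hf E r).2.2) < κ := by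
    refine Cardinal.mk_iUnion_le_sum_mk.trans_lt (Cardinal.sum_lt_of_isRegular hreg hz
      fun r => ?_)
    exact (Set.finite_range _).lt_aleph0.trans hκ
  have hA : #(stepSetA hf E) < κ :=
    (Cardinal.mk_union_le _ _).trans_lt (Cardinal.add_lt_of_lt hκ.le
      ((Cardinal.mk_union_le _ _).trans_lt (Cardinal.add_lt_of_lt hκ.le hEl h2)) h3)
  have hB : #(stepSetB hf E) < κ :=
    (Cardinal.mk_union_le _ _).trans_lt (Cardinal.add_lt_of_lt hκ.le hEr h4)
  constructor
  · exact (mk_closure_le _).trans_lt (max_lt hA hκ)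
  · refine (mk_closure_le _).trans_lt (max_lt ?_ hκ)
    exact (Cardinal.mk_union_le _ _).trans_lt (Cardinal.add_lt_of_lt hκ.le
      (Cardinal.mk_image_le.trans_lt hA) hB)


lemma le_refl' (E : Subextension f) : E.le E := ⟨le_rfl, le_rfl⟩

lemma le_trans' {E E' E'' : Subextension f} (h : E.le E') (h' : E'.le E'') : E.le E'' :=
  ⟨h.1.trans h'.1, h.2.trans h'.2⟩

/-- The chain of iterated saturations. -/
noncomputable def chain (E0 : Subextension f) : ℕ → Subextension f
  | 0 => E0
  | n + 1 => step hf (chain E0 n)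

lemma chain_mono (E0 : Subextension f) {m n : ℕ} (h : m ≤ n) :
    (chain hf E0 m).le (chain hf E0 n) := by
  induction n, h using Nat.le_induction with
  | base => exact le_refl' _
  | succ n hmn ih => exact le_trans' ih (le_step hf _)

lemma chain_left_directed (E0 : Subextension f) :
    Directed (· ≤ ·) fun n => (chain hf E0 n).left := fun i j =>
  ⟨max i j, (chain_mono hf E0 (le_max_left i j)).1, (chain_mono hf E0 (le_max_right i j)).1⟩

lemma chain_right_directed (E0 : Subextension f) :
    Directed (· ≤ ·) fun n => (chain hf E0 n).right := fun i j =>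
  ⟨max i j, (chain_mono hf E0 (le_max_left i j)).2, (chain_mono hf E0 (le_max_right i j)).2⟩

/-- The colimit of the chain. -/
noncomputable def colim (E0 : Subextension f) : Subextension f where
  left := ⨆ n, (chain hf E0 n).left
  right := ⨆ n, (chain hf E0 n).right
  maps_mem := fun x hx => by
    rw [Subring.mem_iSup_of_directed (chain_left_directed hf E0)] at hx
    obtain ⟨n, hn⟩ := hx
    exact le_iSup (fun n => (chain hf E0 n).right) n ((chain hf E0 n).maps_mem x hn)

lemma mem_colim_left (E0 : Subextension f) {x : A} :
    x ∈ (colim hf E0).left ↔ ∃ n, x ∈ (chain hf E0 n).left :=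
  Subring.mem_iSup_of_directed (chain_left_directed hf E0)

lemma mem_colim_right (E0 : Subextension f) {x : B} :
    x ∈ (colim hf E0).right ↔ ∃ n, x ∈ (chain hf E0 n).right :=
  Subring.mem_iSup_of_directed (chain_right_directed hf E0)

lemma chain_le_colim (E0 : Subextension f) (n : ℕ) : (chain hf E0 n).le (colim hf E0) :=
  ⟨le_iSup (fun n => (chain hf E0 n).left) n, le_iSup (fun n => (chain hf E0 n).right) n⟩

lemma mk_iUnion_nat_lt {α : Type u} {κ : Cardinal.{u}} (hreg : κ.IsRegular) (hκ : ℵ₀ < κ)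
    (s : ℕ → Set α) (h : ∀ n, #(s n) < κ) : #(⋃ n, s n) < κ := by
  have heq : (⋃ n, s n) = ⋃ m : ULift.{u} ℕ, s m.down := by
    ext x
    simp only [Set.mem_iUnion]
    exact ⟨fun ⟨n, h⟩ => ⟨⟨n⟩, h⟩, fun ⟨m, h⟩ => ⟨m.down, h⟩⟩
  rw [heq]
  refine Cardinal.mk_iUnion_le_sum_mk.trans_lt (Cardinal.sum_lt_of_isRegular hreg ?_
    fun m => h m.down)
  simpa using hκ

lemma chain_small {κ : Cardinal.{u}} (hreg : κ.IsRegular) (hκ : ℵ₀ < κ)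
    (E0 : Subextension f) (hsm : E0.Small κ) (n : ℕ) : (chain hf E0 n).Small κ := by
  induction n with
  | zero => exact hsm
  | succ n ih => exact step_small hf hreg hκ _ ih

lemma colim_small {κ : Cardinal.{u}} (hreg : κ.IsRegular) (hκ : ℵ₀ < κ)
    (E0 : Subextension f) (hsm : E0.Small κ) : (colim hf E0).Small κ := by
  constructor
  · have heq : ((⨆ n, (chain hf E0 n).left : Subring A) : Set A) =
        ⋃ n, ((chain hf E0 n).left : Set A) :=
      Subring.coe_iSup_of_directed (chain_left_directed hf E0)
    have : #((colim hf E0).left) = #(⋃ n, ((chain hf E0 n).left : Set A)) :=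
      Cardinal.mk_congr (Equiv.setCongr heq)
    rw [this]
    exact mk_iUnion_nat_lt hreg hκ _ fun n => (chain_small hf hreg hκ E0 hsm n).1
  · have heq : ((⨆ n, (chain hf E0 n).right : Subring B) : Set B) =
        ⋃ n, ((chain hf E0 n).right : Set B) :=
      Subring.coe_iSup_of_directed (chain_right_directed hf E0)
    have : #((colim hf E0).right) = #(⋃ n, ((chain hf E0 n).right : Set B)) :=
      Cardinal.mk_congr (Equiv.setCongr heq)
    rw [this]
    exact mk_iUnion_nat_lt hreg hκ _ fun n => (chain_small hf hreg hκ E0 hsm n).2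


lemma colim_flat (E0 : Subextension f) :
    letI := (colim hf E0).restrict.toAlgebra
    Module.Flat (colim hf E0).left (colim hf E0).right := by
  letI := (colim hf E0).restrict.toAlgebra
  refine Module.Flat.of_forall_isTrivialRelation ?_
  intro l g x hrel
  let ι := Fin l
  classical
  set n := Fintype.card ι with hn
  set e : Fin n ≃ ι := (Fintype.equivFin ι).symm with he
  set a : Fin n → A := fun k => ↑(g (e k)) with ha
  set d : Fin n → B := fun k => ↑(x (e k)) with hd
  have hcoe : ∀ (c : (colim hf E0).left) (z : (colim hf E0).right),
      ((c • z : (colim hf E0).right) : B) = f (c : A) * (z : B) := fun c z => rfl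
  have hrelB : ∑ k, f (a k) * d k = 0 := by
    calc ∑ k, f (a k) * d k = ∑ i : ι, f ((g i : A)) * ((x i : B)) :=
          Fintype.sum_equiv e _ _ fun k => rfl
      _ = (((∑ i, g i • x i : (colim hf E0).right)) : B) := by
          rw [AddSubmonoidClass.coe_finset_sum]
          exact (Finset.sum_congr rfl fun i _ => (hcoe (g i) (x i)).symm)
      _ = 0 := by rw [hrel]; rfl
  -- find a common stage
  have hstage : ∃ N, (∀ k, a k ∈ (chain hf E0 N).left) ∧ ∀ k, d k ∈ (chain hf E0 N).right := by
    have h1 : ∀ k, ∃ N, a k ∈ (chain hf E0 N).left :=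
      fun k => (mem_colim_left hf E0).1 (g (e k)).2
    have h2 : ∀ k, ∃ N, d k ∈ (chain hf E0 N).right :=
      fun k => (mem_colim_right hf E0).1 (x (e k)).2
    choose Na hNa using h1
    choose Nd hNd using h2
    refine ⟨Finset.univ.sup fun k => max (Na k) (Nd k), fun k => ?_, fun k => ?_⟩
    · exact (chain_mono hf E0 ((le_max_left _ _).trans
        (Finset.le_sup (f := fun k => max (Na k) (Nd k)) (Finset.mem_univ k)))).1 (hNa k)
    · exact (chain_mono hf E0 ((le_max_right _ _).trans
        (Finset.le_sup (f := fun k => max (Na k) (Nd k)) (Finset.mem_univ k)))).2 (hNd k)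
  obtain ⟨N, haN, hdN⟩ := hstage
  obtain ⟨m, c, y, hcmem, hymem, hdy, hac⟩ :=
    step_solveZ hf (chain hf E0 N) a d haN hdN hrelB
  have hcc : ∀ i j, c i j ∈ (colim hf E0).left :=
    fun i j => (chain_le_colim hf E0 (N + 1)).1 (hcmem i j)
  have hyc : ∀ j, y j ∈ (colim hf E0).right :=
    fun j => (chain_le_colim hf E0 (N + 1)).2 (hymem j)
  refine ⟨m,
    fun i j => ⟨c (e.symm i) j, hcc _ _⟩, fun j => ⟨y j, hyc _⟩,
    fun i => ?_, fun j => ?_⟩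
  · apply Subtype.coe_injective
    beta_reduce
    have h1 : ((x i : B)) = d (e.symm i) := by
      rw [hd]; simp only [Equiv.apply_symm_apply]
    rw [h1, hdy (e.symm i), AddSubmonoidClass.coe_finset_sum]
    refine (Fintype.sum_equiv (Equiv.refl _) _ _ fun j => ?_).symm
    exact hcoe _ _
  · apply Subtype.coe_injective
    beta_reduce
    rw [AddSubmonoidClass.coe_finset_sum]
    have : ∀ i : ι, (((g i * ⟨c (e.symm i) j, hcc _ _⟩ : (colim hf E0).left)) : A) =
        a (e.symm i) * c (e.symm i) j := by
      intro i
      have : (g i : A) = a (e.symm i) := by rw [ha]; simp only [Equiv.apply_symm_apply]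
      simp [this]
    calc ∑ i : ι, (((g i * ⟨c (e.symm i) j, hcc _ _⟩ : (colim hf E0).left)) : A)
        = ∑ i : ι, a (e.symm i) * c (e.symm i) j :=
          Finset.sum_congr rfl fun i _ => this i
      _ = ∑ k : Fin n, a k * c k j :=
          Fintype.sum_equiv e.symm _ _ fun i => rfl
      _ = 0 := hac j
      _ = ((0 : (colim hf E0).left) : A) := rfl

lemma colim_faithful (E0 : Subextension f) :
    letI := (colim hf E0).restrict.toAlgebra
    ∀ I : Ideal (colim hf E0).left,
      I • (⊤ : Submodule (colim hf E0).left (colim hf E0).right) = ⊤ → I = ⊤ := by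
  letI := (colim hf E0).restrict.toAlgebra
  intro I htop
  classical
  have hcoe : ∀ (c : (colim hf E0).left) (z : (colim hf E0).right), ((c • z : (colim hf E0).right) : B) = f (c : A) * (z : B) := fun c z => rfl
  have h1 : (1 : (colim hf E0).right) ∈ I • Submodule.span (colim hf E0).left
      (Set.range (id : (colim hf E0).right → (colim hf E0).right)) := by
    rw [Set.range_id, Submodule.span_univ, htop]; trivial
  rw [Submodule.mem_ideal_smul_span_iff_exists_sum] at h1
  obtain ⟨w, hwI, hsum⟩ := h1
  set s := w.support with hs
  set nn := s.card with hnn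
  set es : Fin nn ≃ s := s.equivFin.symm with hes
  set a : Fin nn → A := fun k => ((w ((es k : s) : (colim hf E0).right) : (colim hf E0).left) : A)
    with ha
  set d : Fin nn → B := fun k => (((es k : s) : (colim hf E0).right) : B) with hd
  have hsumB : ∑ k, f (a k) * d k = 1 := by
    have hc : ((w.sum fun i c => c • id i : (colim hf E0).right) : B) = 1 := by rw [hsum]; rfl
    rw [Finsupp.sum, AddSubmonoidClass.coe_finset_sum] at hc
    simp only [id_eq] at hc
    calc ∑ k, f (a k) * d k
        = ∑ k : Fin nn, ((w ((es k : s) : (colim hf E0).right) • ((es k : s) :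
            (colim hf E0).right) : (colim hf E0).right) : B) :=
          Finset.sum_congr rfl fun k _ => (hcoe _ _).symm
      _ = ∑ i : s, ((w (i : (colim hf E0).right) • (i : (colim hf E0).right) :
            (colim hf E0).right) : B) :=
          Fintype.sum_equiv es _ _ fun k => rfl
      _ = ∑ i ∈ s, ((w i • i : (colim hf E0).right) : B) :=
          Finset.sum_coe_sort s (fun i => ((w i • i : (colim hf E0).right) : B))
      _ = 1 := hc
  have hstage : ∃ N, (∀ k, a k ∈ (chain hf E0 N).left) ∧
      ∀ k, d k ∈ (chain hf E0 N).right := by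
    have h1 : ∀ k, ∃ N, a k ∈ (chain hf E0 N).left :=
      fun k => (mem_colim_left hf E0).1 (w ((es k : s) : (colim hf E0).right)).2
    have h2 : ∀ k, ∃ N, d k ∈ (chain hf E0 N).right :=
      fun k => (mem_colim_right hf E0).1 ((es k : s) : (colim hf E0).right).2
    choose Na hNa using h1
    choose Nd hNd using h2
    refine ⟨Finset.univ.sup fun k => max (Na k) (Nd k), fun k => ?_, fun k => ?_⟩
    · exact (chain_mono hf E0 ((le_max_left _ _).trans
        (Finset.le_sup (f := fun k => max (Na k) (Nd k)) (Finset.mem_univ k)))).1 (hNa k)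
    · exact (chain_mono hf E0 ((le_max_right _ _).trans
        (Finset.le_sup (f := fun k => max (Na k) (Nd k)) (Finset.mem_univ k)))).2 (hNd k)
  obtain ⟨N, haN, hdN⟩ := hstage
  obtain ⟨xv, hxvmem, hxvsum⟩ := step_solveU hf (chain hf E0 N) a d haN hdN hsumB
  have hxvC : ∀ k, xv k ∈ (colim hf E0).left :=
    fun k => (chain_le_colim hf E0 (N + 1)).1 (hxvmem k)
  rw [Ideal.eq_top_iff_one]
  have hone : (1 : (colim hf E0).left) =
      ∑ k : Fin nn, w ((es k : s) : (colim hf E0).right) * ⟨xv k, hxvC k⟩ := by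
    apply Subtype.coe_injective
    beta_reduce
    rw [AddSubmonoidClass.coe_finset_sum]
    calc ((1 : (colim hf E0).left) : A) = ∑ k : Fin nn, a k * xv k := hxvsum.symm
      _ = _ := Finset.sum_congr rfl fun k _ => rfl
  rw [hone]
  exact Ideal.sum_mem _ fun k _ => I.mul_mem_right _ (hwI _)

end SubextAux2


/-- Let `κ` be an uncountable regular cardinal and `f : A → B` a faithfully flat
homomorphism of commutative rings.  Then: (a) every `κ`-small subextension of `f` is
contained in a `κ`-small faithfully flat subextension (the inclusion of the poset of
`κ`-small faithfully flat subextensions into the poset of `κ`-small subextensions,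
ordered by componentwise inclusion, is cofinal); and (b) the poset of `κ`-small
faithfully flat subextensions is `κ`-directed: every subset of cardinality `< κ` admits
an upper bound in it. -/
theorem small_faithfullyFlat_subextensions_cofinal_and_directed
    (κ : Cardinal.{u}) (hreg : κ.IsRegular) (hκ : Cardinal.aleph0 < κ)
    {A B : Type u} [CommRing A] [CommRing B] (f : A →+* B)
    (hf : letI : Algebra A B := f.toAlgebra; Module.FaithfullyFlat A B) :
    (∀ E' : Subextension f, E'.Small κ →
      ∃ E : Subextension f, E'.le E ∧ E.Small κ ∧ E.FaithfullyFlat) ∧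
    (∀ S : Set (Subextension f), (∀ E ∈ S, E.Small κ ∧ E.FaithfullyFlat) →
      Cardinal.mk S < κ →
      ∃ E : Subextension f, E.Small κ ∧ E.FaithfullyFlat ∧ ∀ E' ∈ S, E'.le E) := by
  letI : Algebra A B := f.toAlgebra
  have hκ' : ℵ₀ < κ := hκ
  have parta : ∀ E' : Subextension f, E'.Small κ →
      ∃ E : Subextension f, E'.le E ∧ E.Small κ ∧ E.FaithfullyFlat := by
    intro E' hsm
    refine ⟨SubextAux2.colim hf E', SubextAux2.chain_le_colim hf E' 0,
      SubextAux2.colim_small hf hreg hκ' E' hsm, ?_⟩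
    show (letI : Algebra (SubextAux2.colim hf E').left (SubextAux2.colim hf E').right :=
      (SubextAux2.colim hf E').restrict.toAlgebra;
      Module.FaithfullyFlat (SubextAux2.colim hf E').left (SubextAux2.colim hf E').right)
    letI := (SubextAux2.colim hf E').restrict.toAlgebra
    exact (Module.FaithfullyFlat.iff_flat_and_ideal_smul_eq_top _ _).mpr
      ⟨SubextAux2.colim_flat hf E', SubextAux2.colim_faithful hf E'⟩
  refine ⟨parta, ?_⟩
  intro S hS hSκ
  classical
  set L : Set A := ⋃ E ∈ S, ((E : Subextension f).left : Set A) with hL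
  set R : Set B := ⋃ E ∈ S, ((E : Subextension f).right : Set B) with hR
  have hLκ : #L < κ := by
    rw [hL, Set.biUnion_eq_iUnion]
    exact Cardinal.mk_iUnion_le_sum_mk.trans_lt (Cardinal.sum_lt_of_isRegular hreg hSκ
      fun E => (hS E E.2).1.1)
  have hRκ : #R < κ := by
    rw [hR, Set.biUnion_eq_iUnion]
    exact Cardinal.mk_iUnion_le_sum_mk.trans_lt (Cardinal.sum_lt_of_isRegular hreg hSκ
      fun E => (hS E E.2).1.2)
  have hmaps : ∀ x ∈ Subring.closure L, f x ∈ Subring.closure (f '' L ∪ R) := by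
    intro x hx
    have h1 : f x ∈ (Subring.closure L).map f := ⟨x, hx, rfl⟩
    rw [RingHom.map_closure] at h1
    exact Subring.closure_mono Set.subset_union_left h1
  set E0 : Subextension f := ⟨Subring.closure L, Subring.closure (f '' L ∪ R), hmaps⟩ with hE0
  have hE0small : E0.Small κ := by
    constructor
    · exact (SubextAux.mk_closure_le L).trans_lt (max_lt hLκ hκ')
    · refine (SubextAux.mk_closure_le _).trans_lt (max_lt ?_ hκ')
      exact (Cardinal.mk_union_le _ _).trans_lt (Cardinal.add_lt_of_lt hκ'.le
        (Cardinal.mk_image_le.trans_lt hLκ) hRκ)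
  obtain ⟨E, hle, hsm, hff⟩ := parta E0 hE0small
  refine ⟨E, hsm, hff, fun E' hE' => SubextAux2.le_trans' ?_ hle⟩
  constructor
  · intro x hx
    exact Subring.subset_closure (Set.mem_biUnion hE' hx)
  · intro x hx
    exact Subring.subset_closure (Or.inr (Set.mem_biUnion hE' hx))
end

section
/- Let κ be an infinite regular cardinal and let S be a set of cardinality at least κ. Consider the κ-directed system of all subsets A ⊆ S of cardinality < κ, ordered by inclusion, whose union is S. Then the canonical map from the colimit of the sets (A → Bool) → Bool (with transition maps induced by the inclusions, sending G to the functional χ ↦ G(χ|_A)) to the set (S → Bool) → Bool is not surjective. Consequently, the endofunctor of sets T ↦ ((T → Bool) → Bool) does not preserve κ-filtered colimits for any regular cardinal κ; that is, it is not an accessible functor. -/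
open CategoryTheory Limits

/-- The double dualization endofunctor of sets into the two-element set,
`T ↦ ((T → Bool) → Bool)`. -/
def doubleDualBool : Type ⥤ Type where
  obj T := (T → Bool) → Bool
  map f := TypeCat.ofHom fun G χ => G fun t => χ (f t)

/-- A category is `κ`-filtered if every diagram indexed by a category with fewer than
`κ` morphisms admits a cocone. -/
def IsCardinalFilteredCat (κ : Cardinal.{0}) (J : Type) [SmallCategory J] : Prop :=
  ∀ (K : Type) [SmallCategory K], Cardinal.mk (Arrow K) < κ →
    ∀ F : K ⥤ J, Nonempty (Cocone F)

lemma part1 (κ : Cardinal.{0}) (hκ : κ.IsRegular) (S : Type) (hS : κ ≤ Cardinal.mk S) :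
    ∃ G : (S → Bool) → Bool, ∀ A : Set S, Cardinal.mk A < κ →
      ∀ G' : (A → Bool) → Bool, G ≠ fun χ => G' fun a => χ a.1 := by
  classical
  refine ⟨fun χ => decide (∀ s, χ s = true), ?_⟩
  intro A hA G' h
  have hne : ∃ s, s ∉ A := by
    by_contra hc
    push_neg at hc
    have hu : A = Set.univ := Set.eq_univ_of_forall hc
    rw [hu, Cardinal.mk_univ] at hA
    exact absurd (hS.trans_lt hA) (lt_irrefl κ)
  obtain ⟨s, hs⟩ := hne
  have h1 := congrFun h (fun _ => true)
  have h2 := congrFun h (fun t => decide (t ≠ s))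
  simp only at h1 h2
  have e1 : decide (S → True) = true := by simp
  have e2 : decide (∀ t : S, decide (t ≠ s) = true) = false := by
    simp only [decide_eq_false_iff_not]
    intro hall
    simpa using hall s
  rw [e1] at h1
  rw [e2] at h2
  have hres : (fun a : A => decide (a.1 ≠ s)) = fun _ : A => (true : Bool) := by
    funext a
    have : a.1 ≠ s := fun he => hs (he ▸ a.2)
    simp [this]
  rw [hres, ← h1] at h2
  exact Bool.noConfusion h2

section Part2

variable (κ : Cardinal.{0}) (S : Type)

abbrev JJ := {A : Set S // Cardinal.mk A < κ}

def FF : JJ κ S ⥤ Type where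
  obj A := A.1
  map {A B} f := TypeCat.ofHom fun a => ⟨a.1, leOfHom f a.2⟩

def cc : Cocone (FF κ S) where
  pt := S
  ι := { app := fun A => TypeCat.ofHom fun a => a.1, naturality := fun _ _ _ => rfl }

def cc_isColimit (hκ : Cardinal.aleph0 ≤ κ) : IsColimit (cc κ S) where
  desc s := TypeCat.ofHom fun (x : S) => s.ι.app ⟨{x}, by
    rw [Cardinal.mk_singleton]
    exact lt_of_lt_of_le Cardinal.one_lt_aleph0 hκ⟩ ⟨x, rfl⟩
  fac s A := by
    ext a
    have hsub : ({a.1} : Set S) ⊆ A.1 := Set.singleton_subset_iff.2 a.2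
    have h := ConcreteCategory.congr_hom (s.w (homOfLE (show (⟨{a.1}, by
      rw [Cardinal.mk_singleton]; exact lt_of_lt_of_le Cardinal.one_lt_aleph0 hκ⟩ : JJ κ S) ≤ A from hsub))) ⟨a.1, rfl⟩
    exact h.symm
  uniq s m hm := by
    ext x
    exact ConcreteCategory.congr_hom (hm ⟨{x}, by
      exact lt_of_eq_of_lt (Cardinal.mk_singleton (α := S) x) (lt_of_lt_of_le Cardinal.one_lt_aleph0 hκ)⟩) ⟨x, rfl⟩

lemma JJ_filtered (hκ : κ.IsRegular) : IsCardinalFilteredCat κ (JJ κ S) := by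
  intro K _ hK F
  have hKcard : Cardinal.mk K < κ := by
    refine lt_of_le_of_lt (Cardinal.mk_le_of_injective (f := fun k : K => Arrow.mk (𝟙 k)) ?_) hK
    intro a b h
    exact congrArg Comma.left h
  have hA : Cardinal.mk (⋃ k : K, (F.obj k).1) < κ := by
    refine lt_of_le_of_lt (Cardinal.mk_iUnion_le _) ?_
    refine Cardinal.mul_lt_of_lt hκ.aleph0_le hKcard ?_
    exact Cardinal.iSup_lt_of_isRegular hκ hKcard fun k => (F.obj k).2
  exact ⟨{ pt := ⟨_, hA⟩,
           ι := { app := fun k => homOfLE (Set.subset_iUnion (fun k => (F.obj k).1) k),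
                  naturality := fun _ _ _ => Subsingleton.elim _ _ } }⟩

end Part2

/-- Part (1): for an infinite regular cardinal `κ` and a set `S` of cardinality `≥ κ`,
the canonical map from the colimit over the `κ`-directed system of subsets `A ⊆ S` of
cardinality `< κ` of the sets `(A → Bool) → Bool` to `(S → Bool) → Bool` is not
surjective: there is a functional `G` on `S → Bool` which does not factor through
restriction to any subset of cardinality `< κ`.
Part (2): consequently the endofunctor `T ↦ ((T → Bool) → Bool)` of sets does not
preserve `κ`-filtered colimits for any regular cardinal `κ`; it is not accessible. -/
theorem doubleDualBool_not_accessible :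
    (∀ κ : Cardinal.{0}, κ.IsRegular → ∀ S : Type, κ ≤ Cardinal.mk S →
      ∃ G : (S → Bool) → Bool, ∀ A : Set S, Cardinal.mk A < κ →
        ∀ G' : (A → Bool) → Bool, G ≠ fun χ => G' fun a => χ a.1) ∧
    (∀ κ : Cardinal.{0}, κ.IsRegular →
      ¬ ∀ (J : Type) [SmallCategory J], IsCardinalFilteredCat κ J →
          Nonempty (PreservesColimitsOfShape J doubleDualBool)) := by
  refine ⟨part1, ?_⟩
  intro κ hκ H
  set S := Quotient.out κ with hSdef
  have hS : κ ≤ Cardinal.mk S := le_of_eq (Cardinal.mk_out κ).symm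
  obtain ⟨G, hG⟩ := part1 κ hκ S hS
  obtain ⟨hP⟩ := H (JJ κ S) (JJ_filtered κ S hκ)
  have hc := isColimitOfPreserves doubleDualBool (cc_isColimit κ S hκ.aleph0_le)
  obtain ⟨A, G', hG'⟩ := Types.jointly_surjective _ hc (show (doubleDualBool.mapCocone (cc κ S)).pt from G)
  exact hG A.1 A.2 (show (A.1 → Bool) → Bool from G') hG'.symm
end

section
/- Let p be a prime number and let R be a commutative ring in which p = 0. A formal power series f ∈ R⟦X⟧ satisfies f(X + Y) = f(X) + f(Y) in the ring of formal power series in two variables R⟦X, Y⟧ (where f(X + Y) denotes the substitution of X + Y for the variable of f, which is defined since X + Y has zero constant term) if and only if the coefficient of X^n in f vanishes for every natural number n that is not of the form p^k for some k ≥ 0 (in particular the constant coefficient of f vanishes). -/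
universe u

variable {R : Type u} [CommRing R]

/-- The substitution `f(X + Y)` of `X + Y` for the variable of a one-variable formal
power series `f`, as a formal power series in the two variables `X = X 0` and `Y = X 1`:
since `X + Y` has zero constant term, the coefficient of a monomial `d` only depends on
the truncation of `f` in degrees `≤ d 0 + d 1`, and is the corresponding coefficient of
the polynomial obtained by substituting `X + Y` into that truncation. -/
noncomputable def PowerSeries.substAdd (f : PowerSeries R) : MvPowerSeries (Fin 2) R :=
  fun d : Fin 2 →₀ ℕ =>
    MvPowerSeries.coeff d
      (Polynomial.eval₂ ((MvPowerSeries.C : R →+* MvPowerSeries (Fin 2) R))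
        (MvPowerSeries.X 0 + MvPowerSeries.X 1)
        (PowerSeries.trunc (d 0 + d 1 + 1) f))

/-- The power series `f(X)` in the first of the two variables. -/
noncomputable def PowerSeries.substFst (f : PowerSeries R) : MvPowerSeries (Fin 2) R :=
  fun d : Fin 2 →₀ ℕ =>
    MvPowerSeries.coeff d
      (Polynomial.eval₂ ((MvPowerSeries.C : R →+* MvPowerSeries (Fin 2) R)) (MvPowerSeries.X 0)
        (PowerSeries.trunc (d 0 + d 1 + 1) f))

/-- The power series `f(Y)` in the second of the two variables. -/
noncomputable def PowerSeries.substSnd (f : PowerSeries R) : MvPowerSeries (Fin 2) R :=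
  fun d : Fin 2 →₀ ℕ =>
    MvPowerSeries.coeff d
      (Polynomial.eval₂ ((MvPowerSeries.C : R →+* MvPowerSeries (Fin 2) R)) (MvPowerSeries.X 1)
        (PowerSeries.trunc (d 0 + d 1 + 1) f))

open Finset

private lemma finsupp_fin2_eq_iff (d : Fin 2 →₀ ℕ) (a b : ℕ) :
    d = Finsupp.single 0 a + Finsupp.single 1 b ↔ d 0 = a ∧ d 1 = b := by
  constructor
  · rintro rfl; simp
  · rintro ⟨h0, h1⟩
    ext i
    fin_cases i <;> simp [← h0, ← h1]

private lemma coeff_XX (d : Fin 2 →₀ ℕ) (a b : ℕ) :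
    MvPowerSeries.coeff d
      ((MvPowerSeries.X 0 : MvPowerSeries (Fin 2) R) ^ a * MvPowerSeries.X 1 ^ b) =
      if d 0 = a ∧ d 1 = b then 1 else 0 := by
  rw [MvPowerSeries.X_pow_eq, MvPowerSeries.X_pow_eq, MvPowerSeries.monomial_mul_monomial,
    one_mul, MvPowerSeries.coeff_monomial]
  simp only [finsupp_fin2_eq_iff]

private lemma coeff_term (d : Fin 2 →₀ ℕ) (a : R) (k m c : ℕ) :
    MvPowerSeries.coeff d ((MvPowerSeries.C : R →+* MvPowerSeries (Fin 2) R) a *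
      ((MvPowerSeries.X 0 : MvPowerSeries (Fin 2) R) ^ k * MvPowerSeries.X 1 ^ m *
        (c : MvPowerSeries (Fin 2) R))) =
      a * (c : R) * (if d 0 = k ∧ d 1 = m then 1 else 0) := by
  rw [← map_natCast ((MvPowerSeries.C : R →+* MvPowerSeries (Fin 2) R)) c,
    mul_comm ((MvPowerSeries.X 0 : MvPowerSeries (Fin 2) R) ^ k * MvPowerSeries.X 1 ^ m)
      ((MvPowerSeries.C : R →+* MvPowerSeries (Fin 2) R) (c : R)),
    ← mul_assoc, ← map_mul, MvPowerSeries.coeff_C_mul, coeff_XX, mul_assoc]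

private lemma substAdd_coeff (f : PowerSeries R) (d : Fin 2 →₀ ℕ) :
    f.substAdd d = ((d 0 + d 1).choose (d 0) : R) * PowerSeries.coeff (d 0 + d 1) f := by
  have h1 : f.substAdd d = ∑ i ∈ Finset.range (d 0 + d 1 + 1), ∑ k ∈ Finset.range (i + 1),
      PowerSeries.coeff i f * (i.choose k : R) *
        (if d 0 = k ∧ d 1 = i - k then 1 else 0) := by
    show MvPowerSeries.coeff d _ = _
    rw [PowerSeries.eval₂_trunc_eq_sum_range, map_sum]
    refine Finset.sum_congr rfl fun i _ => ?_
    rw [add_pow, Finset.mul_sum, map_sum]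
    refine Finset.sum_congr rfl fun k _ => ?_
    exact coeff_term d _ k (i - k) (i.choose k)
  rw [h1, Finset.sum_eq_single (d 0 + d 1)]
  · rw [Finset.sum_eq_single (d 0)]
    · rw [if_pos ⟨rfl, by omega⟩, mul_one, mul_comm]
    · intro k _ hk
      rw [if_neg (fun h => hk h.1.symm), mul_zero]
    · intro h
      exact absurd (Finset.mem_range.mpr (by omega)) h
  · intro i hi hine
    apply Finset.sum_eq_zero
    intro k hk
    have hki : k ≤ i := Nat.lt_succ_iff.mp (Finset.mem_range.mp hk)
    have : ¬ (d 0 = k ∧ d 1 = i - k) := by rintro ⟨h0, h1⟩; omega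
    rw [if_neg this, mul_zero]
  · intro h
    exact absurd (Finset.mem_range.mpr (by omega)) h

private lemma substFst_coeff (f : PowerSeries R) (d : Fin 2 →₀ ℕ) :
    f.substFst d = if d 1 = 0 then PowerSeries.coeff (d 0) f else 0 := by
  have h1 : f.substFst d = ∑ i ∈ Finset.range (d 0 + d 1 + 1),
      PowerSeries.coeff i f * (if d 0 = i ∧ d 1 = 0 then 1 else 0) := by
    show MvPowerSeries.coeff d _ = _
    rw [PowerSeries.eval₂_trunc_eq_sum_range, map_sum]
    refine Finset.sum_congr rfl fun i _ => ?_
    rw [MvPowerSeries.coeff_C_mul]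
    have := coeff_XX (R := R) d i 0
    rw [pow_zero, mul_one] at this
    rw [this]
  rw [h1, Finset.sum_eq_single (d 0)]
  · by_cases h : d 1 = 0
    · rw [if_pos h, if_pos ⟨rfl, h⟩, mul_one]
    · rw [if_neg h, if_neg (fun hc => h hc.2), mul_zero]
  · intro i _ hi
    rw [if_neg (fun h => hi h.1.symm), mul_zero]
  · intro h
    exact absurd (Finset.mem_range.mpr (by omega)) h

private lemma substSnd_coeff (f : PowerSeries R) (d : Fin 2 →₀ ℕ) :
    f.substSnd d = if d 0 = 0 then PowerSeries.coeff (d 1) f else 0 := by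
  have h1 : f.substSnd d = ∑ i ∈ Finset.range (d 0 + d 1 + 1),
      PowerSeries.coeff i f * (if d 0 = 0 ∧ d 1 = i then 1 else 0) := by
    show MvPowerSeries.coeff d _ = _
    rw [PowerSeries.eval₂_trunc_eq_sum_range, map_sum]
    refine Finset.sum_congr rfl fun i _ => ?_
    rw [MvPowerSeries.coeff_C_mul]
    have := coeff_XX (R := R) d 0 i
    rw [pow_zero, one_mul] at this
    rw [this]
  rw [h1, Finset.sum_eq_single (d 1)]
  · by_cases h : d 0 = 0
    · rw [if_pos h, if_pos ⟨h, rfl⟩, mul_one]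
    · rw [if_neg h, if_neg (fun hc => h hc.1), mul_zero]
  · intro i _ hi
    rw [if_neg (fun h => hi h.2.symm), mul_zero]
  · intro h
    exact absurd (Finset.mem_range.mpr (by omega)) h

private lemma not_dvd_choose_pow_fact {p : ℕ} (hp : p.Prime) :
    ∀ (v n : ℕ), p ^ v ∣ n → ¬ p ∣ n / p ^ v → ¬ p ∣ n.choose (p ^ v) := by
  haveI : Fact p.Prime := ⟨hp⟩
  intro v
  induction v with
  | zero =>
    intro n _ hnd
    simpa [Nat.choose_one_right] using hnd
  | succ v ih =>
    intro n hdvd hnd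
    obtain ⟨t, rfl⟩ := hdvd
    have hppos : 0 < p := hp.pos
    have hnp : (p ^ (v + 1) * t) / p = p ^ v * t := by
      rw [pow_succ, mul_comm (p ^ v) p, mul_assoc, Nat.mul_div_cancel_left _ hppos]
    have hmod : Nat.choose (p ^ (v + 1) * t) (p ^ (v + 1)) ≡
        Nat.choose (p ^ v * t) (p ^ v) [MOD p] := by
      have h := Choose.choose_modEq_choose_mod_mul_choose_div_nat
        (p := p) (n := p ^ (v + 1) * t) (k := p ^ (v + 1))
      have h1 : (p ^ (v + 1) * t) % p = 0 := by
        rw [pow_succ, mul_comm (p ^ v) p, mul_assoc]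
        exact Nat.mul_mod_right p _
      have h2 : (p ^ (v + 1)) % p = 0 := by
        rw [pow_succ]
        exact Nat.mul_mod_left _ p
      have h3 : (p ^ (v + 1)) / p = p ^ v := by
        rw [pow_succ, Nat.mul_div_cancel _ hppos]
      rwa [h1, h2, h3, hnp, Nat.choose_self, one_mul] at h
    have hT : ¬ p ∣ t := by
      intro hpt
      apply hnd
      rwa [Nat.mul_div_cancel_left t (pow_pos hppos (v + 1))]
    have hih : ¬ p ∣ (p ^ v * t).choose (p ^ v) := by
      apply ih (p ^ v * t) (Dvd.intro t rfl)
      rwa [Nat.mul_div_cancel_left t (pow_pos hppos v)]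
    intro hcon
    exact hih (Nat.modEq_zero_iff_dvd.mp (hmod.symm.trans (Nat.modEq_zero_iff_dvd.mpr hcon)))

private lemma exists_not_dvd_choose {p : ℕ} (hp : p.Prime) {n : ℕ} (hn : 0 < n)
    (h : ∀ k, n ≠ p ^ k) : ∃ a, 0 < a ∧ a < n ∧ ¬ p ∣ n.choose a := by
  refine ⟨p ^ n.factorization p, pow_pos hp.pos _, ?_,
    not_dvd_choose_pow_fact hp _ n (Nat.ordProj_dvd n p) (Nat.not_dvd_ordCompl hp hn.ne')⟩
  exact lt_of_le_of_ne (Nat.le_of_dvd hn (Nat.ordProj_dvd n p))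
    (fun he => h (n.factorization p) he.symm)

private lemma cast_mul_eq_zero {p : ℕ} (hp : p.Prime) (hpR : (p : R) = 0)
    {m : ℕ} (hm : ¬ p ∣ m) {x : R} (hx : (m : R) * x = 0) : x = 0 := by
  have hco : Nat.Coprime m p := (hp.coprime_iff_not_dvd.mpr hm).symm
  obtain ⟨c, -, hc⟩ := Nat.exists_mul_mod_eq_one_of_coprime hco hp.one_lt
  have h2 := Nat.div_add_mod (m * c) p
  rw [hc] at h2
  have hone : ((m * c : ℕ) : R) = 1 := by
    rw [← h2]
    push_cast
    rw [hpR]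
    ring
  have hx' : ((m * c : ℕ) : R) * x = 0 := by
    push_cast
    rw [mul_comm (m : R) (c : R), mul_assoc, hx, mul_zero]
  rwa [hone, one_mul] at hx'

/-- Let `p` be a prime number and `R` a commutative ring in which `p = 0`.  A formal
power series `f ∈ R⟦X⟧` is additive, i.e. satisfies `f(X + Y) = f(X) + f(Y)` in
`R⟦X, Y⟧`, if and only if the coefficient of `X^n` in `f` vanishes for every `n` that is
not of the form `p^k` (in particular the constant coefficient vanishes). -/
theorem powerSeries_additive_iff_coeff_support_pow_prime
    (p : ℕ) (hp : p.Prime) (hpR : (p : R) = 0) (f : PowerSeries R) :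
    f.substAdd = f.substFst + f.substSnd ↔
      ∀ n : ℕ, (∀ k : ℕ, n ≠ p ^ k) → PowerSeries.coeff n f = 0 := by
  have happ : ∀ (d : Fin 2 →₀ ℕ), (f.substFst + f.substSnd) d = f.substFst d + f.substSnd d := by
    intro d
    rfl
  constructor
  · intro hadd n hn
    have hco : ∀ d : Fin 2 →₀ ℕ, f.substAdd d = f.substFst d + f.substSnd d := by
      intro d
      rw [hadd, happ]
    rcases Nat.eq_zero_or_pos n with rfl | hn0
    · have h0 := hco 0
      rw [substAdd_coeff, substFst_coeff, substSnd_coeff] at h0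
      simp only [Finsupp.coe_zero, Pi.zero_apply, add_zero, Nat.choose_self, Nat.cast_one,
        one_mul, if_pos rfl] at h0
      exact right_eq_add.mp h0
    · obtain ⟨a, ha0, han, hnd⟩ := exists_not_dvd_choose hp hn0 hn
      set d : Fin 2 →₀ ℕ := Finsupp.single 0 a + Finsupp.single 1 (n - a) with hd
      have hd0 : d 0 = a := by simp [hd]
      have hd1 : d 1 = n - a := by simp [hd]
      have h := hco d
      rw [substAdd_coeff, substFst_coeff, substSnd_coeff, hd0, hd1,
        if_neg (by omega : ¬ (n - a = 0)), if_neg (by omega : ¬ a = 0), add_zero,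
        (by omega : a + (n - a) = n)] at h
      exact cast_mul_eq_zero hp hpR hnd h
  · intro hc
    funext d
    rw [happ, substAdd_coeff, substFst_coeff, substSnd_coeff]
    by_cases h1 : d 1 = 0
    · by_cases h0 : d 0 = 0
      · rw [if_pos h1, if_pos h0, h0, h1, hc 0 (fun k => (pow_pos hp.pos k).ne), add_zero,
          Nat.choose_self, Nat.cast_one, one_mul, add_zero]
      · rw [if_pos h1, if_neg h0, h1, add_zero, add_zero, Nat.choose_self, Nat.cast_one, one_mul]
    · by_cases h0 : d 0 = 0
      · rw [if_neg h1, if_pos h0, h0, zero_add, zero_add, Nat.choose_zero_right, Nat.cast_one,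
          one_mul]
      · rw [if_neg h1, if_neg h0, add_zero]
        by_cases hpow : ∃ k, d 0 + d 1 = p ^ k
        · obtain ⟨k, hk⟩ := hpow
          have hdvd : p ∣ (d 0 + d 1).choose (d 0) := by
            rw [hk]
            exact hp.dvd_choose_pow h0 (by omega)
          obtain ⟨t, ht⟩ := hdvd
          rw [ht]
          push_cast
          rw [hpR, zero_mul, zero_mul]
        · rw [hc (d 0 + d 1) (fun k hk => hpow ⟨k, hk⟩), mul_zero]
end

section
/- Let p be a prime number, let R be a commutative ring in which p = 0, and let b, d : ℕ → R be sequences. Let f, g ∈ R⟦X⟧ be the power series whose coefficient of X^{p^i} equals b(i) (respectively d(i)) for every i ≥ 0 and all of whose coefficients in degrees that are not powers of p vanish. Then the composite power series g(f(X)) (the substitution of f, which has zero constant term, into g) has coefficient of X^{p^n} equal to Σ_{i + j = n} b(i)^{p^j} · d(j), and its coefficients in all degrees that are not powers of p vanish. -/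
universe u

variable {R : Type u} [CommRing R]

/-- The composite `g(f(X))` of two one-variable formal power series (the substitution of
`f`, assumed to have zero constant term, into `g`): the coefficient of `X^n` only
depends on the truncation of `g` in degrees `≤ n`, and is the corresponding coefficient
of the power series obtained by substituting `f` into that truncation. -/
noncomputable def PowerSeries.compose (g f : PowerSeries R) : PowerSeries R :=
  PowerSeries.mk fun n =>
    PowerSeries.coeff (R := R) n
      (Polynomial.eval₂ (PowerSeries.C (R := R)) f (PowerSeries.trunc (n + 1) g))

lemma aux_coeff_mul_lowzero (r c : PowerSeries R) (m : ℕ)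
    (hr : ∀ k ≤ m, PowerSeries.coeff (R := R) k r = 0) :
    PowerSeries.coeff (R := R) m (r * c) = 0 := by
  rw [PowerSeries.coeff_mul]
  refine Finset.sum_eq_zero fun ij hij => ?_
  rw [Finset.HasAntidiagonal.mem_antidiagonal] at hij
  rw [hr ij.1 (by omega), zero_mul]

lemma aux_coeff_pow_p (p : ℕ) (hp : p.Prime) [CharP R p] (h : PowerSeries R) (m : ℕ) :
    PowerSeries.coeff (R := R) m (h ^ p) =
      if p ∣ m then (PowerSeries.coeff (R := R) (m / p) h) ^ p else 0 := by
  haveI : Fact p.Prime := ⟨hp⟩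
  set t := PowerSeries.trunc (m + 1) h with ht
  have key : PowerSeries.coeff (R := R) m (h ^ p) = PowerSeries.coeff (R := R) m ((t : PowerSeries R) ^ p) := by
    obtain ⟨c, hc⟩ := sub_dvd_pow_sub_pow h (t : PowerSeries R) p
    have h0 : PowerSeries.coeff (R := R) m ((h - (t : PowerSeries R)) * c) = 0 := by
      refine aux_coeff_mul_lowzero _ _ _ fun k hk => ?_
      rw [map_sub, Polynomial.coeff_coe, PowerSeries.coeff_trunc, if_pos (by omega), sub_self]
    have h1 := congrArg (PowerSeries.coeff (R := R) m) hc
    rw [map_sub, h0, sub_eq_zero] at h1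
    exact h1
  rw [key, ← Polynomial.coe_pow, Polynomial.coeff_coe,
    ← Polynomial.map_frobenius_expand p t, Polynomial.coeff_map, Polynomial.coeff_expand hp.pos]
  split_ifs with hd
  · rw [frobenius_def, ht, PowerSeries.coeff_trunc,
      if_pos (lt_of_le_of_lt (Nat.div_le_self m p) (Nat.lt_succ_self m))]
  · exact map_zero _

lemma aux_coeff_pow_ppow (p : ℕ) (hp : p.Prime) [CharP R p] (h : PowerSeries R) (j m : ℕ) :
    PowerSeries.coeff (R := R) m (h ^ p ^ j) =
      if p ^ j ∣ m then (PowerSeries.coeff (R := R) (m / p ^ j) h) ^ p ^ j else 0 := by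
  induction j generalizing h m with
  | zero => simp
  | succ j ih =>
    have hpow : h ^ p ^ (j + 1) = (h ^ p) ^ p ^ j := by
      rw [← pow_mul, pow_succ, mul_comm]
    rw [hpow, ih, aux_coeff_pow_p p hp]
    by_cases h1 : p ^ j ∣ m
    · have hiff : p ∣ m / p ^ j ↔ p ^ (j + 1) ∣ m := by
        rw [Nat.dvd_div_iff_mul_dvd h1, ← pow_succ]
      rw [if_pos h1]
      by_cases h2 : p ^ (j + 1) ∣ m
      · rw [if_pos (hiff.mpr h2), if_pos h2, ← pow_mul, Nat.div_div_eq_div_mul,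
          ← pow_succ, ← pow_succ']
      · rw [if_neg (fun hh => h2 (hiff.mp hh)), if_neg h2,
          zero_pow (pow_pos hp.pos j).ne']
    · rw [if_neg h1, if_neg (fun hh => h1 (dvd_trans (pow_dvd_pow p (Nat.le_succ j)) hh))]

lemma aux_coeff_compose (g f : PowerSeries R) (m : ℕ) :
    PowerSeries.coeff (R := R) m (g.compose f) =
      ∑ k ∈ Finset.range (m + 1), PowerSeries.coeff (R := R) k g * PowerSeries.coeff (R := R) m (f ^ k) := by
  rw [PowerSeries.compose, PowerSeries.coeff_mk, PowerSeries.trunc_apply,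
    Polynomial.eval₂_finset_sum, map_sum, Finset.range_eq_Ico]
  refine Finset.sum_congr rfl fun k _ => ?_
  rw [Polynomial.eval₂_monomial, PowerSeries.coeff_C_mul]

/-- Let `p` be prime, `R` a commutative ring with `p = 0`, and `b d : ℕ → R`.  Let
`f, g ∈ R⟦X⟧` be the power series whose coefficient of `X^{p^i}` is `b i`
(respectively `d i`) and whose coefficients in degrees that are not powers of `p`
vanish.  Then the composite `g(f(X))` has coefficient of `X^{p^n}` equal to
`∑_{i+j=n} b(i)^{p^j} · d(j)`, and its coefficients in all degrees that are not powers
of `p` vanish. -/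
theorem compose_additive_powerSeries_coeff
    (p : ℕ) (hp : p.Prime) (hpR : (p : R) = 0) (b d : ℕ → R) (f g : PowerSeries R)
    (hfb : ∀ i : ℕ, PowerSeries.coeff (R := R) (p ^ i) f = b i)
    (hf0 : ∀ m : ℕ, (∀ i : ℕ, m ≠ p ^ i) → PowerSeries.coeff (R := R) m f = 0)
    (hgd : ∀ i : ℕ, PowerSeries.coeff (R := R) (p ^ i) g = d i)
    (hg0 : ∀ m : ℕ, (∀ i : ℕ, m ≠ p ^ i) → PowerSeries.coeff (R := R) m g = 0) :
    (∀ n : ℕ, PowerSeries.coeff (R := R) (p ^ n) (g.compose f) =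
      ∑ ij ∈ Finset.HasAntidiagonal.antidiagonal n, b ij.1 ^ p ^ ij.2 * d ij.2) ∧
    (∀ m : ℕ, (∀ k : ℕ, m ≠ p ^ k) → PowerSeries.coeff (R := R) m (g.compose f) = 0) := by
  rcases subsingleton_or_nontrivial R with hR | hR
  · exact ⟨fun n => Subsingleton.elim _ _, fun m _ => Subsingleton.elim _ _⟩
  haveI : CharP R p := by
    obtain ⟨r, hr⟩ := CharP.exists R
    have hdvd : r ∣ p := (CharP.cast_eq_zero_iff R r p).mp hpR
    rcases hp.eq_one_or_self_of_dvd r hdvd with h1 | h1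
    · exact absurd h1 (CharP.char_ne_one R r)
    · rwa [h1] at hr
  have hfpow : ∀ j m : ℕ, PowerSeries.coeff (R := R) m (f ^ p ^ j) =
      if p ^ j ∣ m then (PowerSeries.coeff (R := R) (m / p ^ j) f) ^ p ^ j else 0 :=
    fun j m => aux_coeff_pow_ppow p hp f j m
  constructor
  · intro n
    rw [aux_coeff_compose]
    have hsub : (Finset.range (n + 1)).image (p ^ ·) ⊆ Finset.range (p ^ n + 1) := by
      intro k hk
      simp only [Finset.mem_image, Finset.mem_range] at hk ⊢
      obtain ⟨j, hj, rfl⟩ := hk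
      have := Nat.pow_le_pow_right hp.pos (by omega : j ≤ n)
      omega
    have hzero : ∀ k ∈ Finset.range (p ^ n + 1),
        k ∉ (Finset.range (n + 1)).image (p ^ ·) →
        PowerSeries.coeff (R := R) k g * PowerSeries.coeff (R := R) (p ^ n) (f ^ k) = 0 := by
      intro k hk hknot
      rw [hg0 k, zero_mul]
      intro i hi
      apply hknot
      simp only [Finset.mem_image, Finset.mem_range]
      refine ⟨i, ?_, hi.symm⟩
      by_contra hcon
      have : p ^ n < p ^ i := Nat.pow_lt_pow_right hp.one_lt (by omega)
      simp only [Finset.mem_range] at hk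
      omega
    rw [← Finset.sum_subset hsub hzero,
      Finset.sum_image (fun a _ c _ h => Nat.pow_right_injective hp.two_le h)]
    have hLHS : ∑ ij ∈ Finset.HasAntidiagonal.antidiagonal n, b ij.1 ^ p ^ ij.2 * d ij.2 =
        ∑ j ∈ Finset.range (n + 1), b (n - j) ^ p ^ j * d j := by
      rw [Finset.Nat.sum_antidiagonal_eq_sum_range_succ_mk,
        ← Finset.sum_range_reflect]
      refine Finset.sum_congr rfl fun j hj => ?_
      simp only [Finset.mem_range] at hj
      have e2 : n - (n.succ - 1 - j) = j := by omega
      have e1 : n.succ - 1 - j = n - j := by omega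
      rw [e2, e1]
    rw [hLHS]
    refine Finset.sum_congr rfl fun j hj => ?_
    simp only [Finset.mem_range] at hj
    rw [hgd, hfpow, if_pos (pow_dvd_pow p (by omega : j ≤ n)),
      Nat.pow_div (by omega) hp.pos, hfb, mul_comm]
  · intro m hm
    rw [aux_coeff_compose]
    refine Finset.sum_eq_zero fun k _ => ?_
    by_cases hkp : ∃ j, k = p ^ j
    · obtain ⟨j, rfl⟩ := hkp
      rw [hfpow]
      split_ifs with hd
      · have hne : ∀ i, m / p ^ j ≠ p ^ i := by
          intro i hi
          exact hm (i + j) (by rw [pow_add, ← hi, Nat.div_mul_cancel hd])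
        rw [hf0 _ hne, zero_pow (pow_pos hp.pos j).ne', mul_zero]
      · rw [mul_zero]
    · rw [hg0 k (fun i h => hkp ⟨i, h⟩), zero_mul]
end

section
/- Let p be a prime number and let A = F_p[ξ_1, ξ_2, ξ_3, …] be the polynomial ring over the field F_p with p elements on countably many variables ξ_i indexed by integers i ≥ 1; set ξ_0 = 1 by convention. Let ψ : A → A ⊗_{F_p} A be the F_p-algebra homomorphism determined by ψ(ξ_i) = Σ_{j = 0}^{i} ξ_{i−j}^{p^j} ⊗ ξ_j for all i ≥ 1, and let ε : A → F_p be the F_p-algebra homomorphism with ε(ξ_i) = 0 for all i ≥ 1. Then ψ is coassociative, i.e. (ψ ⊗ id) ∘ ψ = (id ⊗ ψ) ∘ ψ after identifying (A ⊗ A) ⊗ A with A ⊗ (A ⊗ A) by the associativity isomorphism, and ε is a counit for ψ, i.e. (ε ⊗ id) ∘ ψ = id_A = (id ⊗ ε) ∘ ψ after the unit isomorphisms F_p ⊗ A ≅ A ≅ A ⊗ F_p. -/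
open scoped TensorProduct

/-- The generators `ξᵢ` (for `i ≥ 1`) of the polynomial ring
`A = F_p[ξ₁, ξ₂, …]`, with the convention `ξ₀ = 1`. -/
noncomputable def steenrodXi (p : ℕ) (i : ℕ) : MvPolynomial ℕ+ (ZMod p) :=
  if h : 0 < i then MvPolynomial.X (⟨i, h⟩ : ℕ+) else 1

lemma steenrodXi_zero (p : ℕ) : steenrodXi p 0 = 1 := rfl

lemma steenrodXi_pnat (p : ℕ) (i : ℕ+) : steenrodXi p (i : ℕ) = MvPolynomial.X i := by
  rw [steenrodXi, dif_pos i.pos]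
  exact congrArg MvPolynomial.X (Subtype.ext rfl)


private lemma steenrod_sum_reindex {M : Type*} [AddCommMonoid M] (n : ℕ) (f : ℕ → ℕ → M) :
    ∑ j ∈ Finset.range (n + 1), ∑ m ∈ Finset.range ((n - j) + 1), f j m
      = ∑ j ∈ Finset.range (n + 1), ∑ m ∈ Finset.range (j + 1), f m (j - m) := by
  rw [Finset.sum_sigma', Finset.sum_sigma']
  refine Finset.sum_nbij' (fun x => ⟨x.1 + x.2, x.1⟩) (fun x => ⟨x.2, x.1 - x.2⟩)
    ?_ ?_ ?_ ?_ ?_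
  · rintro ⟨j, m⟩ hx
    simp only [Finset.mem_sigma, Finset.mem_range] at hx ⊢
    omega
  · rintro ⟨j, m⟩ hx
    simp only [Finset.mem_sigma, Finset.mem_range] at hx ⊢
    omega
  · rintro ⟨j, m⟩ hx
    simp
  · rintro ⟨j, m⟩ hx
    simp only [Finset.mem_sigma, Finset.mem_range] at hx
    have h : m + (j - m) = j := by omega
    simp [h]
  · rintro ⟨j, m⟩ hx
    simp only
    rw [Nat.add_sub_cancel_left]

/-- Milnor's coalgebra structure on the (even part of the) dual Steenrod algebra
`A = F_p[ξ₁, ξ₂, …]`: the `F_p`-algebra homomorphism `ψ : A → A ⊗ A` determined by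
`ψ(ξᵢ) = ∑_{0 ≤ j ≤ i} ξ_{i-j}^{p^j} ⊗ ξ_j` is coassociative, and the `F_p`-algebra
homomorphism `ε : A → F_p` with `ε(ξᵢ) = 0` for `i ≥ 1` is a counit for it. -/
theorem dualSteenrod_coassoc_and_counit (p : ℕ) (hp : p.Prime)
    (ψ : MvPolynomial ℕ+ (ZMod p) →ₐ[ZMod p]
      (MvPolynomial ℕ+ (ZMod p) ⊗[ZMod p] MvPolynomial ℕ+ (ZMod p)))
    (hψ : ∀ i : ℕ+, ψ (MvPolynomial.X i) =
      ∑ j ∈ Finset.range ((i : ℕ) + 1),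
        ((steenrodXi p ((i : ℕ) - j)) ^ (p ^ j)) ⊗ₜ[ZMod p] (steenrodXi p j))
    (ε : MvPolynomial ℕ+ (ZMod p) →ₐ[ZMod p] ZMod p)
    (hε : ∀ i : ℕ+, ε (MvPolynomial.X i) = 0) :
    -- coassociativity
    ((Algebra.TensorProduct.assoc (ZMod p) (ZMod p) (ZMod p) (MvPolynomial ℕ+ (ZMod p))
          (MvPolynomial ℕ+ (ZMod p)) (MvPolynomial ℕ+ (ZMod p))).toAlgHom.comp
        ((Algebra.TensorProduct.map ψ (AlgHom.id (ZMod p) _)).comp ψ) =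
      (Algebra.TensorProduct.map (AlgHom.id (ZMod p) _) ψ).comp ψ) ∧
    -- left counit law
    ((Algebra.TensorProduct.lid (ZMod p) (MvPolynomial ℕ+ (ZMod p))).toAlgHom.comp
        ((Algebra.TensorProduct.map ε (AlgHom.id (ZMod p) _)).comp ψ) =
      AlgHom.id (ZMod p) (MvPolynomial ℕ+ (ZMod p))) ∧
    -- right counit law
    ((Algebra.TensorProduct.rid (ZMod p) (ZMod p)
          (MvPolynomial ℕ+ (ZMod p))).toAlgHom.comp
        ((Algebra.TensorProduct.map (AlgHom.id (ZMod p) _) ε).comp ψ) =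
      AlgHom.id (ZMod p) (MvPolynomial ℕ+ (ZMod p))) := by
  haveI : Fact p.Prime := ⟨hp⟩
  haveI : CharP (MvPolynomial ℕ+ (ZMod p) ⊗[ZMod p] MvPolynomial ℕ+ (ZMod p)) p :=
    charP_of_injective_algebraMap
      (algebraMap (ZMod p) (MvPolynomial ℕ+ (ZMod p) ⊗[ZMod p] MvPolynomial ℕ+ (ZMod p))).injective p
  -- ψ on all ξ_k, including k = 0
  have hψ' : ∀ k : ℕ, ψ (steenrodXi p k) =
      ∑ m ∈ Finset.range (k + 1),
        ((steenrodXi p (k - m)) ^ (p ^ m)) ⊗ₜ[ZMod p] steenrodXi p m := by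
    intro k
    cases k with
    | zero => simp [steenrodXi_zero, Algebra.TensorProduct.one_def]
    | succ n =>
        have h : 0 < n + 1 := Nat.succ_pos n
        have := hψ ⟨n + 1, h⟩
        rw [show steenrodXi p (n + 1) = MvPolynomial.X ⟨n + 1, h⟩ from steenrodXi_pnat p ⟨n + 1, h⟩]
        exact this
  have hε' : ∀ k : ℕ, ε (steenrodXi p k) = if k = 0 then 1 else 0 := by
    intro k
    cases k with
    | zero => simp [steenrodXi_zero]
    | succ n =>
        have h : 0 < n + 1 := Nat.succ_pos n
        simp [steenrodXi, h, hε ⟨n + 1, h⟩]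
  refine ⟨?_, ?_, ?_⟩
  · -- coassociativity
    apply MvPolynomial.algHom_ext
    intro i
    have key : ∀ j : ℕ, ψ (steenrodXi p ((i : ℕ) - j) ^ p ^ j) =
        ∑ m ∈ Finset.range (((i : ℕ) - j) + 1),
          ((steenrodXi p ((i : ℕ) - j - m)) ^ (p ^ (m + j))) ⊗ₜ[ZMod p]
            ((steenrodXi p m) ^ (p ^ j)) := by
      intro j
      rw [map_pow, hψ', sum_pow_char_pow]
      refine Finset.sum_congr rfl fun m _ => ?_
      rw [Algebra.TensorProduct.tmul_pow, ← pow_mul, ← pow_add]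
    simp only [AlgHom.coe_comp, AlgEquiv.toAlgHom_eq_coe, AlgHom.coe_coe, Function.comp_apply,
      AlgEquiv.coe_toAlgHom]
    rw [hψ i, map_sum, map_sum, map_sum]
    simp only [Algebra.TensorProduct.map_tmul, AlgHom.coe_id, id_eq, key, hψ',
      TensorProduct.sum_tmul, TensorProduct.tmul_sum, map_sum,
      Algebra.TensorProduct.assoc_tmul]
    -- reindex the double sum
    set n := (i : ℕ) with hn
    rw [steenrod_sum_reindex n (fun j m =>
      ((steenrodXi p (n - j - m)) ^ p ^ (m + j)) ⊗ₜ[ZMod p]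
        (((steenrodXi p m) ^ p ^ j) ⊗ₜ[ZMod p] steenrodXi p j))]
    refine Finset.sum_congr rfl fun j hj => Finset.sum_congr rfl fun m hm => ?_
    simp only [Finset.mem_range] at hj hm
    have h1 : n - m - (j - m) = n - j := by omega
    have h2 : j - m + m = j := by omega
    simp only [h1, h2]
  · -- left counit
    apply MvPolynomial.algHom_ext
    intro i
    simp only [AlgHom.coe_comp, AlgEquiv.toAlgHom_eq_coe, AlgHom.coe_coe, Function.comp_apply,
      AlgHom.coe_id, id_eq]
    rw [hψ i, map_sum, map_sum]
    simp only [Algebra.TensorProduct.map_tmul, AlgHom.coe_id, id_eq, map_pow, hε',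
      Algebra.TensorProduct.lid_tmul]
    rw [Finset.sum_eq_single_of_mem (i : ℕ) (Finset.self_mem_range_succ _)]
    · simp [steenrodXi_pnat]
    · intro j hj hne
      have h : ¬ ((i : ℕ) - j = 0) := by
        simp only [Finset.mem_range] at hj; omega
      simp [h, zero_pow (pow_ne_zero _ hp.ne_zero)]
  · -- right counit
    apply MvPolynomial.algHom_ext
    intro i
    simp only [AlgHom.coe_comp, AlgEquiv.toAlgHom_eq_coe, AlgHom.coe_coe, Function.comp_apply,
      AlgHom.coe_id, id_eq]
    rw [hψ i, map_sum, map_sum]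
    simp only [Algebra.TensorProduct.map_tmul, AlgHom.coe_id, id_eq, hε',
      Algebra.TensorProduct.rid_tmul]
    rw [Finset.sum_eq_single_of_mem 0 (Finset.mem_range.mpr (Nat.succ_pos _))]
    · simp [steenrodXi_pnat]
    · intro j hj hne
      simp [hne]
end
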